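/- Let x, y ∈ ℂ^{n×r} and let U ∈ U(r) satisfy x* y U = (x* y y* x)^{1/2} (i.e. x* y U is positive semidefinite). Then (y U x*)² = y y* x x* and (x U* y*)² = x x* y y*; that is, y U x* is a square root of (y y*)(x x*) with nonnegative real eigenvalues, and x U* y* is a square root of (x x*)(y y*). -/

import Mathlib

open Matrix Filter
open scoped ComplexOrder

noncomputable def Matrix.PosSemidef.sqrt {n 𝕜 : Type*} [Fintype n] [RCLike 𝕜] [DecidableEq n]
    {A : Matrix n n 𝕜} (hA : A.PosSemidef) : Matrix n n 𝕜 :=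
  hA.1.eigenvectorUnitary.1 * diagonal ((↑) ∘ (Real.sqrt ∘ hA.1.eigenvalues)) *
  (star hA.1.eigenvectorUnitary : Matrix n n 𝕜)

noncomputable def frob {p q : ℕ} (x : Matrix (Fin p) (Fin q) ℂ) : ℝ :=
  Real.sqrt (Matrix.trace (xᴴ * x)).re

noncomputable def rinner {p q : ℕ} (X Y : Matrix (Fin p) (Fin q) ℂ) : ℝ :=
  (Matrix.trace (Xᴴ * Y)).re

noncomputable def nuclear {p q : ℕ} (x : Matrix (Fin p) (Fin q) ℂ) : ℝ :=
  (Matrix.trace (Matrix.PosSemidef.sqrt (Matrix.posSemidef_conjTranspose_mul_self x))).re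

noncomputable def theta {n r : ℕ} (x : Matrix (Fin n) (Fin r) ℂ) : Matrix (Fin n) (Fin n) ℂ :=
  Matrix.PosSemidef.sqrt (Matrix.posSemidef_self_mul_conjTranspose x)

noncomputable def psi {n r : ℕ} (x : Matrix (Fin n) (Fin r) ℂ) : Matrix (Fin n) (Fin n) ℂ :=
  frob x • theta x

noncomputable def Dmet {n r : ℕ} (x y : Matrix (Fin n) (Fin r) ℂ) : ℝ :=
  ⨅ U : Matrix.unitaryGroup (Fin r) ℂ, frob (x - y * (U : Matrix (Fin r) (Fin r) ℂ))

noncomputable def dmet {n r : ℕ} (x y : Matrix (Fin n) (Fin r) ℂ) : ℝ :=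
  ⨅ U : Matrix.unitaryGroup (Fin r) ℂ,
    frob (x - y * (U : Matrix (Fin r) (Fin r) ℂ)) * frob (x + y * (U : Matrix (Fin r) (Fin r) ℂ))


/-- if `U ∈ U(r)` satisfies `x* y U = (x* y y* x)^{1/2}` (so `x* y U` is
positive semidefinite), then `(y U x*)² = y y* x x*` and `(x U* y*)² = x x* y y*`;
moreover `y U x*` (a square root of `(y y*)(x x*)`) has only nonnegative real
eigenvalues. -/
theorem polar_square_roots (n r : ℕ) (x y : Matrix (Fin n) (Fin r) ℂ)
    (U : Matrix (Fin r) (Fin r) ℂ) (hU : U ∈ Matrix.unitaryGroup (Fin r) ℂ)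
    (hpol : xᴴ * y * U = Matrix.PosSemidef.sqrt (Matrix.posSemidef_self_mul_conjTranspose (xᴴ * y))) :
    (y * U * xᴴ) * (y * U * xᴴ) = y * yᴴ * (x * xᴴ) ∧
    (x * Uᴴ * yᴴ) * (x * Uᴴ * yᴴ) = x * xᴴ * (y * yᴴ) ∧
    (∀ μ : ℂ, (y * U * xᴴ - μ • (1 : Matrix (Fin n) (Fin n) ℂ)).det = 0 →
      ∃ t : ℝ, 0 ≤ t ∧ μ = (t : ℂ)) := by
  have hUU' : U * Uᴴ = 1 := by
    rw [← Matrix.star_eq_conjTranspose]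
    exact (Matrix.mem_unitaryGroup_iff).mp hU
  have hU'U : Uᴴ * U = 1 := by
    rw [← Matrix.star_eq_conjTranspose]
    exact (Matrix.mem_unitaryGroup_iff').mp hU
  have hP : (xᴴ * y * U).PosSemidef := by
    rw [hpol]
    unfold Matrix.PosSemidef.sqrt
    exact (Matrix.posSemidef_diagonal_iff.mpr fun i => Complex.zero_le_real.mpr (Real.sqrt_nonneg _)).mul_mul_conjTranspose_same _
  have hHer : Uᴴ * (yᴴ * x) = xᴴ * y * U := by
    have := hP.1
    unfold Matrix.IsHermitian at this
    calc Uᴴ * (yᴴ * x) = (xᴴ * y * U)ᴴ := by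
          simp [Matrix.conjTranspose_mul, Matrix.mul_assoc]
      _ = xᴴ * y * U := this
  have hUP : U * (xᴴ * y * U) = yᴴ * x := by
    rw [← hHer, ← Matrix.mul_assoc, hUU', Matrix.one_mul]
  have hPU : (xᴴ * y * U) * Uᴴ = xᴴ * y := by
    rw [Matrix.mul_assoc, hUU', Matrix.mul_one]
  refine ⟨?_, ?_, ?_⟩
  · calc (y * U * xᴴ) * (y * U * xᴴ) = y * (U * (xᴴ * y * U)) * xᴴ := by
          simp only [Matrix.mul_assoc]
      _ = y * yᴴ * (x * xᴴ) := by rw [hUP]; simp only [Matrix.mul_assoc]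
  · calc (x * Uᴴ * yᴴ) * (x * Uᴴ * yᴴ)
        = x * (Uᴴ * (yᴴ * x)) * (Uᴴ * yᴴ) := by simp only [Matrix.mul_assoc]
      _ = x * ((xᴴ * y * U) * Uᴴ) * yᴴ := by rw [hHer]; simp only [Matrix.mul_assoc]
      _ = x * xᴴ * (y * yᴴ) := by rw [hPU]; simp only [Matrix.mul_assoc]
  · intro μ hμ
    by_cases hμ0 : μ = 0
    · exact ⟨0, le_refl 0, by simp [hμ0]⟩
    -- transfer the eigenvalue to the r×r PSD matrix P = xᴴ y U
    have key : ((xᴴ * y * U) - μ • (1 : Matrix (Fin r) (Fin r) ℂ)).det = 0 := by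
      have h1 : (y * U * xᴴ - μ • (1 : Matrix (Fin n) (Fin n) ℂ))
          = (-μ) • (1 - (μ⁻¹ • (y * U)) * xᴴ) := by
        rw [smul_sub, Matrix.smul_mul, smul_smul]
        field_simp
        simp only [neg_smul, one_smul]; abel
      have h2 : ((xᴴ * y * U) - μ • (1 : Matrix (Fin r) (Fin r) ℂ))
          = (-μ) • (1 - xᴴ * (μ⁻¹ • (y * U))) := by
        rw [smul_sub, Matrix.mul_smul, smul_smul]
        have : xᴴ * (y * U) = xᴴ * y * U := by simp only [Matrix.mul_assoc]
        field_simp [this]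
        simp only [neg_smul, one_smul, this]; abel
      have hd : (1 - (μ⁻¹ • (y * U)) * xᴴ).det = 0 := by
        have := hμ
        rw [h1, Matrix.det_smul] at this
        have hne : (-μ) ^ Fintype.card (Fin n) ≠ 0 := pow_ne_zero _ (neg_ne_zero.mpr hμ0)
        exact (mul_eq_zero.mp this).resolve_left hne
      rw [h2, Matrix.det_smul, ← Matrix.det_one_sub_mul_comm, hd, mul_zero]
    obtain ⟨v, hv0, hv⟩ := Matrix.exists_mulVec_eq_zero_iff.mpr key
    have hPv : (xᴴ * y * U) *ᵥ v = μ • v := by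
      have : (xᴴ * y * U) *ᵥ v - (μ • (1 : Matrix (Fin r) (Fin r) ℂ)) *ᵥ v = 0 := by
        rw [← Matrix.sub_mulVec]; exact hv
      have h1v : (μ • (1 : Matrix (Fin r) (Fin r) ℂ)) *ᵥ v = μ • v := by
        rw [Matrix.smul_mulVec, Matrix.one_mulVec]
      rw [h1v] at this
      linear_combination (norm := module) this
    have hnn : 0 ≤ μ * (star v ⬝ᵥ v) := by
      have := hP.dotProduct_mulVec_nonneg v
      rwa [hPv, dotProduct_smul, smul_eq_mul] at this
    have hc : 0 ≤ star v ⬝ᵥ v := dotProduct_star_self_nonneg v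
    have hcne : star v ⬝ᵥ v ≠ 0 := fun h => hv0 (dotProduct_star_self_eq_zero.mp h)
    set c : ℂ := star v ⬝ᵥ v with hcdef
    rw [Complex.le_def] at hc hnn
    simp only [Complex.zero_re, Complex.zero_im, Complex.mul_re, Complex.mul_im] at hc hnn
    have him : c.im = 0 := hc.2.symm
    have hcre : 0 < c.re := by
      rcases lt_or_eq_of_le hc.1 with h | h
      · exact h
      · exact absurd (Complex.ext h.symm him) hcne
    rw [him] at hnn
    simp only [mul_zero, sub_zero, add_zero, zero_mul] at hnn
    refine ⟨μ.re, ?_, ?_⟩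
    · nlinarith [hnn.1, hcre]
    · have : μ.im = 0 := by
        have h : μ.im * c.re = 0 := by linarith [hnn.2]
        rcases mul_eq_zero.mp h with h | h
        · exact h
        · exact absurd h (ne_of_gt hcre)
      exact (Complex.ext (by simp) (by simp [this])).symm
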